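/- For c > b > 0 and x < 1, the Gauss hypergeometric function satisfies the Pfaff transformation F(a,b,c;x) = (1-x)^{-a} F(a, c-b, c; x/(x-1)), where both sides are given by the Euler integral representation. -/
import Mathlib


open MeasureTheory

noncomputable def betaB (a b : ℝ) : ℝ := ∫ x in (0:ℝ)..1, x ^ (a - 1) * (1 - x) ^ (b - 1)

noncomputable def gaussF (a b c x : ℝ) : ℝ :=
  (betaB b (c - b))⁻¹ * ∫ t in (0:ℝ)..1, t ^ (b - 1) * (1 - t) ^ (c - b - 1) * (1 - x*t) ^ (-a)

lemma betaB_symm (a b : ℝ) : betaB a b = betaB b a := by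
  unfold betaB
  have h := intervalIntegral.integral_comp_sub_left (a := (0:ℝ)) (b := 1)
    (fun x : ℝ => x ^ (a - 1) * (1 - x) ^ (b - 1)) 1
  simp only [sub_zero, sub_self, sub_sub_cancel] at h
  rw [← h]
  apply intervalIntegral.integral_congr
  intro t _
  simp [mul_comm]

theorem stmt7 (a b c x : ℝ) (hcb : c > b) (hb : b > 0) (hx : x < 1) :
    gaussF a b c x = (1 - x) ^ (-a) * gaussF a (c - b) c (x / (x - 1)) := by
  have hx1 : (0:ℝ) < 1 - x := by linarith
  unfold gaussF
  rw [show c - (c - b) = b from by ring, betaB_symm (c - b) b]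
  have key : (∫ t in (0:ℝ)..1, t ^ (b - 1) * (1 - t) ^ (c - b - 1) * (1 - x*t) ^ (-a))
      = (1 - x) ^ (-a) *
        ∫ t in (0:ℝ)..1, t ^ (c - b - 1) * (1 - t) ^ (b - 1) * (1 - (x/(x-1))*t) ^ (-a) := by
    rw [← intervalIntegral.integral_const_mul]
    have h := intervalIntegral.integral_comp_sub_left (a := (0:ℝ)) (b := 1)
      (fun t : ℝ => (1 - x) ^ (-a) * (t ^ (c - b - 1) * (1 - t) ^ (b - 1) * (1 - (x/(x-1))*t) ^ (-a))) 1
    simp only [sub_zero, sub_self] at h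
    rw [← h]
    apply intervalIntegral.integral_congr
    intro t ht
    simp only [Set.uIcc_of_le (by norm_num : (0:ℝ) ≤ 1), Set.mem_Icc] at ht
    have hxt : (0:ℝ) < 1 - x * t := by
      rcases le_or_gt x 0 with h0 | h0
      · nlinarith [mul_nonneg (neg_nonneg.2 h0) ht.1]
      · nlinarith [mul_le_mul_of_nonneg_left ht.2 h0.le]
    have hx1' : x - 1 ≠ 0 := sub_ne_zero_of_ne (ne_of_lt hx)
    have h1 : 1 - (x/(x-1))*(1 - t) = (1 - x*t)/(1 - x) := by
      field_simp
      ring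
    have hne : (1 - x) ^ (-a) ≠ 0 := ne_of_gt (Real.rpow_pos_of_pos hx1 _)
    have h2 : (1 - x) ^ (-a) * (1 - (x/(x-1))*(1 - t)) ^ (-a) = (1 - x*t) ^ (-a) := by
      rw [h1, Real.div_rpow (le_of_lt hxt) (le_of_lt hx1), mul_div_assoc', mul_comm,
        mul_div_assoc, div_self hne, mul_one]
    simp only []
    rw [sub_sub_cancel, ← h2]
    ring
  rw [key]
  ring
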